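/- For a knapsack constraint aᵀx ≤ b with a₁ ≤ a₂ ≤ ... ≤ aₙ, a set N ∪ {t} ⊆ [n] (with t ∉ N, 2 ≤ k ≤ |N|) is a (1,k)-configuration if and only if: a(N) ≤ b, a_t + a(N^{[k-1]}) ≤ b, and a_t + a(N_{[k]}) > b, where N^{[k-1]} denotes the k-1 largest elements of N and N_{[k]} the k smallest elements of N. -/

import Mathlib

open Finset

/-- The set of the `k` smallest elements of `N` (with respect to the index ordering). -/
def lowK {n : ℕ} (N : Finset (Fin n)) (k : ℕ) : Finset (Fin n) :=
  ((N.sort (· ≤ ·)).take k).toFinset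

/-- The set of the `k` largest elements of `N` (with respect to the index ordering). -/
def highK {n : ℕ} (N : Finset (Fin n)) (k : ℕ) : Finset (Fin n) :=
  ((N.sort (· ≤ ·)).drop (N.card - k)).toFinset

private lemma sum_take_le_sublist :
    ∀ {M L : List ℤ}, M.Sublist L → L.Pairwise (· ≤ ·) → (L.take M.length).sum ≤ M.sum := by
  intro M L h
  induction h with
  | slnil => simp
  | @cons l₁ l₂ x h ih =>
    intro hs
    match l₁ with
    | [] => simp
    | y :: M' =>
      have hlen : M'.length + 1 ≤ l₂.length := h.length_le
      have hx : x ≤ l₂[M'.length]'hlen :=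
        List.rel_of_pairwise_cons hs (List.getElem_mem hlen)
      have ihs := ih hs.of_cons
      simp only [List.length_cons] at ihs ⊢
      rw [List.sum_take_succ _ _ hlen] at ihs
      rw [List.take_succ_cons, List.sum_cons]
      linarith
  | @cons_cons l₁ l₂ x h ih =>
    intro hs
    have := ih hs.of_cons
    simp only [List.length_cons, List.take_succ_cons, List.sum_cons]
    linarith

section helpers

variable {n : ℕ} (a : Fin n → ℤ) (N : Finset (Fin n))

private lemma sum_sort : ∑ i ∈ N, a i = ((N.sort (· ≤ ·)).map a).sum := by
  conv_lhs => rw [← Finset.sort_toFinset (s := N) (r := (· ≤ ·))]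
  rw [List.sum_toFinset _ (Finset.sort_nodup _ _)]

private lemma sum_lowK (k : ℕ) :
    ∑ i ∈ lowK N k, a i = (((N.sort (· ≤ ·)).map a).take k).sum := by
  rw [lowK, List.sum_toFinset _ ((Finset.sort_nodup _ _).sublist (List.take_sublist _ _)),
    List.map_take]

private lemma sum_highK (k : ℕ) :
    ∑ i ∈ highK N k, a i = (((N.sort (· ≤ ·)).map a).drop (N.card - k)).sum := by
  rw [highK, List.sum_toFinset _ ((Finset.sort_nodup _ _).sublist (List.drop_sublist _ _)),
    List.map_drop]

private lemma lowK_subset (k : ℕ) : lowK N k ⊆ N := fun x hx => by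
  rw [lowK, List.mem_toFinset] at hx
  exact (Finset.mem_sort _).1 (List.take_subset _ _ hx)

private lemma highK_subset (k : ℕ) : highK N k ⊆ N := fun x hx => by
  rw [highK, List.mem_toFinset] at hx
  exact (Finset.mem_sort _).1 (List.drop_subset _ _ hx)

private lemma card_lowK (k : ℕ) (hk : k ≤ N.card) : (lowK N k).card = k := by
  rw [lowK, List.toFinset_card_of_nodup
    ((Finset.sort_nodup _ _).sublist (List.take_sublist _ _))]
  rw [List.length_take, Finset.length_sort]
  omega

private lemma card_highK (k : ℕ) (hk : k ≤ N.card) : (highK N k).card = k := by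
  rw [highK, List.toFinset_card_of_nodup
    ((Finset.sort_nodup _ _).sublist (List.drop_sublist _ _))]
  rw [List.length_drop, Finset.length_sort]
  omega

variable (hmono : Monotone a)
include hmono

private lemma sorted_map : ((N.sort (· ≤ ·)).map a).Pairwise (· ≤ ·) :=
  List.Pairwise.map a (fun _ _ hab => hmono hab) (Finset.pairwise_sort _ _)

/-- `lowK` minimizes the sum among subsets of the same cardinality. -/
private lemma lowK_min {Q : Finset (Fin n)} (hQ : Q ⊆ N) :
    ∑ i ∈ lowK N Q.card, a i ≤ ∑ i ∈ Q, a i := by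
  have hsubl : (Q.sort (· ≤ ·)).Sublist (N.sort (· ≤ ·)) := by
    refine List.sublist_of_subperm_of_pairwise ?_ (Finset.pairwise_sort _ _) (Finset.pairwise_sort _ _)
    exact (Finset.sort_nodup _ _).subperm
      (fun x hx => (Finset.mem_sort _).2 (hQ ((Finset.mem_sort _).1 hx)))
  have hmap : ((Q.sort (· ≤ ·)).map a).Sublist ((N.sort (· ≤ ·)).map a) := hsubl.map a
  have := sum_take_le_sublist hmap (sorted_map a N hmono)
  rw [List.length_map, Finset.length_sort] at this
  rw [sum_lowK, sum_sort a Q]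
  exact this

/-- `highK` maximizes the sum among subsets of the same cardinality. -/
private lemma highK_max {Q : Finset (Fin n)} (hQ : Q ⊆ N) :
    ∑ i ∈ Q, a i ≤ ∑ i ∈ highK N Q.card, a i := by
  have hcard : Q.card ≤ N.card := Finset.card_le_card hQ
  have hsplit : ∑ i ∈ N, a i
      = ∑ i ∈ lowK N (N.card - Q.card), a i + ∑ i ∈ highK N Q.card, a i := by
    rw [sum_sort a N, sum_lowK, sum_highK]
    exact (List.sum_take_add_sum_drop _ _).symm
  have hQsplit : ∑ i ∈ N \ Q, a i + ∑ i ∈ Q, a i = ∑ i ∈ N, a i := Finset.sum_sdiff hQ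
  have hmin := lowK_min a N hmono (Finset.sdiff_subset (s := N) (t := Q))
  rw [Finset.card_sdiff_of_subset hQ] at hmin
  linarith

end helpers

theorem config_characterization {n : ℕ} (a : Fin n → ℤ) (ha : ∀ i, 0 ≤ a i)
    (hmono : Monotone a) (b : ℤ) (hb : 0 ≤ b)
    (N : Finset (Fin n)) (t : Fin n) (ht : t ∉ N)
    (k : ℕ) (hk2 : 2 ≤ k) (hkN : k ≤ N.card) :
    ((∑ i ∈ N, a i ≤ b) ∧
      (∀ Q ⊆ N, Q.card = k →
        (b < ∑ i ∈ insert t Q, a i ∧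
          ∀ j ∈ insert t Q, ∑ i ∈ (insert t Q).erase j, a i ≤ b)))
    ↔ ((∑ i ∈ N, a i ≤ b) ∧
        a t + ∑ i ∈ highK N (k - 1), a i ≤ b ∧
        b < a t + ∑ i ∈ lowK N k, a i) := by
  have hk1N : k - 1 ≤ N.card := by omega
  have hHsub := highK_subset N (k - 1)
  have hHcard := card_highK N (k - 1) hk1N
  have htH : t ∉ highK N (k - 1) := fun h => ht (hHsub h)
  constructor
  · rintro ⟨h1, h2⟩
    refine ⟨h1, ?_, ?_⟩
    · -- use Q = highK ∪ {j} for some j ∈ N \ highK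
      have hne : highK N (k - 1) ≠ N := by
        intro he
        rw [he] at hHcard
        omega
      obtain ⟨j, hjN, hjH⟩ := Finset.exists_of_ssubset (lt_of_le_of_ne hHsub hne)
      set Q : Finset (Fin n) := insert j (highK N (k - 1)) with hQdef
      have hQsub : Q ⊆ N := Finset.insert_subset hjN hHsub
      have hQcard : Q.card = k := by
        rw [hQdef, Finset.card_insert_of_notMem hjH, hHcard]; omega
      obtain ⟨-, hmin⟩ := h2 Q hQsub hQcard
      have hjt : j ≠ t := fun h => ht (h ▸ hjN)
      have hj : j ∈ insert t Q := Finset.mem_insert_of_mem (Finset.mem_insert_self _ _)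
      have := hmin j hj
      have heq : (insert t Q).erase j = insert t (highK N (k - 1)) := by
        rw [hQdef, Finset.insert_comm, Finset.erase_insert]
        simp only [Finset.mem_insert]
        push_neg
        exact ⟨hjt, hjH⟩
      rw [heq, Finset.sum_insert htH] at this
      exact this
    · have hLsub := lowK_subset N k
      have hLcard := card_lowK N k hkN
      obtain ⟨hcov, -⟩ := h2 (lowK N k) hLsub hLcard
      have htL : t ∉ lowK N k := fun h => ht (hLsub h)
      rwa [Finset.sum_insert htL] at hcov
  · rintro ⟨h1, h2, h3⟩
    refine ⟨h1, fun Q hQ hQcard => ?_⟩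
    have htQ : t ∉ Q := fun h => ht (hQ h)
    constructor
    · rw [Finset.sum_insert htQ]
      have := lowK_min a N hmono hQ
      rw [hQcard] at this
      linarith
    · intro j hj
      rcases Finset.mem_insert.1 hj with rfl | hjQ
      · rw [Finset.erase_insert htQ]
        calc ∑ i ∈ Q, a i ≤ ∑ i ∈ N, a i :=
              Finset.sum_le_sum_of_subset_of_nonneg hQ (fun i _ _ => ha i)
          _ ≤ b := h1
      · have hjt : j ≠ t := fun h => ht (h ▸ hQ hjQ)
        rw [Finset.erase_insert_of_ne hjt.symm,
          Finset.sum_insert (fun h => htQ (Finset.erase_subset _ _ h))]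
        have hsub : Q.erase j ⊆ N := (Finset.erase_subset _ _).trans hQ
        have := highK_max a N hmono hsub
        rw [Finset.card_erase_of_mem hjQ, hQcard] at this
        linarith
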